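/- Let K be a field of characteristic 0 and let (U,·,ω) be a strong n-Lie-Poisson algebra over K. Define the alternating (n+1)-linear map ω̃ = id∧ω by ω̃(u_0,u_1,...,u_n) = Σ_{i=0}^n (−1)^i u_i·ω(u_0,...,û_i,...,u_n). Then: (1) ω̃ satisfies the Fundamental Identity of type I for (n+1)-ary multiplications, i.e. (U,ω̃) is an (n+1)-Lie algebra; (2) f^{ω̃} = 0; and (3) if U has a unit 1, then ω̃(u·u',u_1,...,u_n) − u·ω̃(u',u_1,...,u_n) − u'·ω̃(u,u_1,...,u_n) = −(u·u')·ω̃(1,u_1,...,u_n) for all u,u',u_1,...,u_n ∈ U. -/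

import Mathlib

open Finset

/-- `ω` is an `m`-linear map over `K`. -/
def IsMultilinear (K : Type*) [Field K] {U : Type*} [CommRing U] [Algebra K U] {m : ℕ}
    (ω : (Fin m → U) → U) : Prop :=
  ∀ (v : Fin m → U) (i : Fin m) (c : K) (x y : U),
    ω (Function.update v i (c • x + y)) =
      c • ω (Function.update v i x) + ω (Function.update v i y)

/-- `ω` is alternating: it vanishes whenever two arguments coincide. -/
def IsAlternating {U : Type*} [CommRing U] {m : ℕ} (ω : (Fin m → U) → U) : Prop :=
  ∀ (v : Fin m → U) (i j : Fin m), i ≠ j → v i = v j → ω v = 0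

/-- Fundamental Identity of type I for an `(n+1)`-ary multiplication. -/
def FundamentalIdentityI {U : Type*} [CommRing U] {n : ℕ} (ω : (Fin (n + 1) → U) → U) : Prop :=
  ∀ (u : Fin n → U) (v : Fin (n + 1) → U),
    ω (Fin.snoc u (ω v)) =
      ∑ i : Fin (n + 1), ω (Function.update v i (ω (Fin.snoc u (v i))))

/-- The Leibniz rule relating an `(n+1)`-ary multiplication with the associative product. -/
def LeibnizRule {U : Type*} [CommRing U] {n : ℕ} (ω : (Fin (n + 1) → U) → U) : Prop :=
  ∀ (a b : U) (u : Fin n → U),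
    ω (Fin.cons (a * b) u) = a * ω (Fin.cons b u) + b * ω (Fin.cons a u)

/-- The polynomial `f^ω(u_1,…,u_n, v_1,…,v_{n+2})` for an `(n+1)`-ary multiplication `ω`. -/
def fPoly {U : Type*} [CommRing U] {n : ℕ} (ω : (Fin (n + 1) → U) → U)
    (u : Fin n → U) (v : Fin (n + 2) → U) : U :=
  ∑ i : Fin (n + 2), (-1 : U) ^ ((i : ℕ) + 1) * (ω (Fin.snoc u (v i)) * ω (i.removeNth v))

/-- The `(n+2)`-ary multiplication `id ∧ ω`:
`(id∧ω)(u_0,…,u_{n+1}) = Σ_i (−1)^i u_i·ω(u_0,…,û_i,…,u_{n+1})`. -/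
def idWedge {U : Type*} [CommRing U] {n : ℕ} (ω : (Fin (n + 1) → U) → U)
    (u : Fin (n + 2) → U) : U :=
  ∑ i : Fin (n + 2), (-1 : U) ^ (i : ℕ) * (u i * ω (i.removeNth u))

set_option linter.unnecessarySeqFocus false
set_option linter.unusedVariables false

open Finset




lemma succAbove_val {m : ℕ} (p : Fin (m+1)) (i : Fin m) :
    ((p.succAbove i : Fin (m+1)) : ℕ) = if (i:ℕ) < (p:ℕ) then (i:ℕ) else (i:ℕ)+1 := by
  rcases Nat.lt_or_ge (i:ℕ) (p:ℕ) with h | h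
  · rw [Fin.succAbove_of_castSucc_lt _ _ (by simpa [Fin.lt_def] using h), if_pos h]; rfl
  · rw [Fin.succAbove_of_le_castSucc _ _ (by simpa [Fin.le_def] using h), if_neg (by omega)]; rfl

lemma neg_one_pow_par {U : Type*} [CommRing U] (a b : ℕ) (h : a % 2 = b % 2) :
    (-1 : U)^a = (-1 : U)^b := by
  rcases Nat.even_or_odd a with ha | ha
  · have hb : Even b := by rw [Nat.even_iff] at *; omega
    rw [ha.neg_one_pow, hb.neg_one_pow]
  · have hb : Odd b := by rw [Nat.odd_iff] at *; omega
    rw [ha.neg_one_pow, hb.neg_one_pow]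

lemma removeNth_update_succAbove {m : ℕ} {α : Type*} (p : Fin (m+1)) (i : Fin m)
    (x : α) (f : Fin (m+1) → α) :
    (p.removeNth (Function.update f (p.succAbove i) x) : Fin m → α)
      = Function.update (p.removeNth f : Fin m → α) i x := by
  funext a
  simp [Fin.removeNth, Function.update_apply, Fin.succAbove_right_inj]

section slot
variable {K : Type*} [Field K] {U : Type*} [CommRing U] [Algebra K U] {m : ℕ}
variable {ω : (Fin m → U) → U}

lemma upd_add (hml : IsMultilinear K ω) (v : Fin m → U) (i : Fin m) (x y : U) :
    ω (Function.update v i (x + y)) = ω (Function.update v i x) + ω (Function.update v i y) := by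
  have := hml v i 1 x y
  simpa using this

lemma upd_zero (hml : IsMultilinear K ω) (v : Fin m → U) (i : Fin m) : ω (Function.update v i 0) = 0 := by
  have := upd_add hml v i 0 0
  simpa using this.symm

lemma upd_neg (hml : IsMultilinear K ω) (v : Fin m → U) (i : Fin m) (x : U) :
    ω (Function.update v i (-x)) = - ω (Function.update v i x) := by
  have h := upd_add hml v i x (-x)
  simp only [add_neg_cancel, upd_zero hml] at h
  linear_combination -h

lemma upd_negpow (hml : IsMultilinear K ω) (v : Fin m → U) (i : Fin m) (p : ℕ) (x : U) :
    ω (Function.update v i ((-1:U)^p * x)) = (-1:U)^p * ω (Function.update v i x) := by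
  rcases Nat.even_or_odd p with hp | hp
  · rw [hp.neg_one_pow, one_mul, one_mul]
  · rw [hp.neg_one_pow, neg_one_mul, neg_one_mul, upd_neg hml]

lemma upd_sum {β : Type*} (hml : IsMultilinear K ω) (v : Fin m → U) (i : Fin m) (T : Finset β) (g : β → U) :
    ω (Function.update v i (∑ t ∈ T, g t)) = ∑ t ∈ T, ω (Function.update v i (g t)) := by
  classical
  induction T using Finset.induction with
  | empty => simpa using upd_zero hml v i
  | insert _ _ hnot ih =>
      rw [Finset.sum_insert hnot, Finset.sum_insert hnot, upd_add hml, ih]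

lemma upd_swap (hml : IsMultilinear K ω) (halt : IsAlternating ω) (v : Fin m → U) (a b : Fin m) (hab : a ≠ b) :
    ω (Function.update (Function.update v a (v b)) b (v a)) = - ω v := by
  have key : ∀ x y : U, ω (Function.update (Function.update v a (x + y)) b (x + y)) = 0 := by
    intro x y
    apply halt _ a b hab
    rw [Function.update_apply, Function.update_apply]
    simp [hab, Function.update_self]
  have exp : ∀ x y : U, ω (Function.update (Function.update v a x) b y)
      = ω (Function.update (Function.update v a x) b y) := fun _ _ => rfl
  -- bilinearity expansion
  have hadd_b : ∀ x y z : U, ω (Function.update (Function.update v a x) b (y + z))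
      = ω (Function.update (Function.update v a x) b y)
        + ω (Function.update (Function.update v a x) b z) := fun x y z => upd_add hml _ b y z
  have hadd_a : ∀ x y z : U, ω (Function.update (Function.update v a (x + y)) b z)
      = ω (Function.update (Function.update v a x) b z)
        + ω (Function.update (Function.update v a y) b z) := by
    intro x y z
    rw [Function.update_comm hab (x+y) z v, Function.update_comm hab x z v,
      Function.update_comm hab y z v]
    exact upd_add hml _ a x y
  have h0 := key (v a) (v b)
  rw [hadd_b, hadd_a, hadd_a] at h0
  have d1 : ω (Function.update (Function.update v a (v a)) b (v a)) = 0 := by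
    apply halt _ a b hab
    simp [Function.update_apply, hab]
  have d2 : ω (Function.update (Function.update v a (v b)) b (v b)) = 0 := by
    apply halt _ a b hab
    simp [Function.update_apply, hab]
  have d3 : ω (Function.update (Function.update v a (v a)) b (v b)) = ω v := by
    rw [Function.update_eq_self, Function.update_eq_self]
  rw [d1, d2, d3] at h0
  linear_combination h0
end slot

lemma removeNth_snoc_castSucc {m : ℕ} {α : Type*} (l : Fin (m+1)) (w : Fin (m+1) → α) (y : α) :
    ((l.castSucc).removeNth (Fin.snoc w y : Fin (m+2) → α) : Fin (m+1) → α)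
      = Fin.snoc (l.removeNth w : Fin m → α) y := by
  funext a
  refine Fin.lastCases ?_ (fun b => ?_) a
  · have h : (l.castSucc).succAbove (Fin.last m) = Fin.last (m+1) := by
      ext
      rw [succAbove_val]
      simp
      omega
    simp [Fin.removeNth, h]
  · have h : (l.castSucc).succAbove (b.castSucc) = (l.succAbove b).castSucc :=
      Fin.castSucc_succAbove_castSucc
    simp [Fin.removeNth, h]

lemma removeNth_cons_succ {m : ℕ} {α : Type*} (j : Fin (m+1)) (w : Fin (m+1) → α) (y : α) :
    ((j.succ).removeNth (Fin.cons y w : Fin (m+2) → α) : Fin (m+1) → α)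
      = Fin.cons y (j.removeNth w : Fin m → α) := by
  funext a
  refine Fin.cases ?_ (fun b => ?_) a
  · have h : (j.succ).succAbove 0 = 0 := Fin.succ_succAbove_zero j
    simp [Fin.removeNth, h]
  · have h : (j.succ).succAbove (b.succ) = (j.succAbove b).succ := Fin.succ_succAbove_succ j b
    simp [Fin.removeNth, h]



section signs
variable {K : Type*} [Field K] {U : Type*} [CommRing U] [Algebra K U] {n : ℕ}
variable {ω : (Fin (n+1) → U) → U}

lemma upd_snoc (hml : IsMultilinear K ω) (halt : IsAlternating ω) :
    ∀ (l : Fin (n+1)) (w : Fin (n+1) → U) (x : U),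
    ω (Function.update w l x) = (-1:U)^(n - (l:ℕ)) * ω (Fin.snoc (l.removeNth w : Fin n → U) x) := by
  intro l
  induction l using Fin.reverseInduction with
  | last =>
      intro w x
      have h1 : Function.update w (Fin.last n) x = Fin.snoc ((Fin.last n).removeNth w : Fin n → U) x := by
        funext a
        refine Fin.lastCases ?_ (fun b => ?_) a
        · simp
        · simp [Fin.removeNth_last, Fin.init, Function.update_apply, (Fin.castSucc_lt_last b).ne]
      rw [h1]
      simp
  | cast j ih =>
      intro w x
      set w' : Fin (n+1) → U := Function.update w j.castSucc (w j.succ) with hw'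
      have hne : j.castSucc ≠ j.succ := (Fin.castSucc_lt_succ (i := j)).ne
      have step : ω (Function.update w j.castSucc x) = - ω (Function.update w' j.succ x) := by
        have hs := upd_swap hml halt (Function.update w j.castSucc x) j.castSucc j.succ hne
        have e1 : (Function.update w j.castSucc x) j.succ = w j.succ := by
          rw [Function.update_of_ne hne.symm]
        have e2 : (Function.update w j.castSucc x) j.castSucc = x := Function.update_self _ _ _
        rw [e1, e2] at hs
        have e3 : Function.update (Function.update (Function.update w j.castSucc x) j.castSucc (w j.succ)) j.succ x
            = Function.update w' j.succ x := by
          rw [Function.update_idem]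
        rw [e3] at hs
        linear_combination hs
      have hrn : ((j.succ).removeNth w' : Fin n → U) = ((j.castSucc).removeNth w : Fin n → U) := by
        funext a
        show w' (j.succ.succAbove a) = w (j.castSucc.succAbove a)
        rcases lt_trichotomy (a:ℕ) (j:ℕ) with hc | hc | hc
        · have hL : (j.succ).succAbove a = a.castSucc := by
            ext; rw [succAbove_val]; simp [Fin.val_succ]; omega
          have hR : (j.castSucc).succAbove a = a.castSucc := by
            ext; rw [succAbove_val]; simp; omega
          rw [hL, hR, hw']
          rw [Function.update_of_ne]
          simp [Fin.ext_iff]; omega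
        · have hL : (j.succ).succAbove a = a.castSucc := by
            ext; rw [succAbove_val]; simp [Fin.val_succ]; omega
          have hR : (j.castSucc).succAbove a = a.succ := by
            ext; rw [succAbove_val]; simp; omega
          rw [hL, hR, hw']
          have : a.castSucc = j.castSucc := by ext; simpa using hc
          rw [this, Function.update_self]
          congr 1
          ext; simp; omega
        · have hL : (j.succ).succAbove a = a.succ := by
            ext; rw [succAbove_val]; simp [Fin.val_succ]; omega
          have hR : (j.castSucc).succAbove a = a.succ := by
            ext; rw [succAbove_val]; simp; omega
          rw [hL, hR, hw']
          rw [Function.update_of_ne]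
          simp [Fin.ext_iff]; omega
      rw [step, ih w' x, hrn]
      have hj : (j.succ : ℕ) = (j:ℕ)+1 := Fin.val_succ j
      have hcs : ((j.castSucc : Fin (n+1)) : ℕ) = (j:ℕ) := Fin.coe_castSucc j
      have harith : n - (j:ℕ) = (n - ((j:ℕ)+1)) + 1 := by have := j.isLt; omega
      rw [hj, hcs, harith, pow_succ]
      ring
end signs

section leib
variable {K : Type*} [Field K] {U : Type*} [CommRing U] [Algebra K U] {n : ℕ}
variable {ω : (Fin (n+1) → U) → U}

lemma neg_one_sq_pow (p : ℕ) : ((-1:U)^p) * ((-1:U)^p) = 1 := by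
  rw [← pow_add]
  exact Even.neg_one_pow ⟨p, rfl⟩

lemma cons_eq_sign_snoc (hml : IsMultilinear K ω) (halt : IsAlternating ω)
    (q : Fin n → U) (y : U) :
    ω (Fin.cons y q) = (-1:U)^n * ω (Fin.snoc q y) := by
  have h0 : ω (Fin.cons y q) = ω (Function.update (Fin.cons y q : Fin (n+1) → U) 0 y) := by
    rw [Fin.update_cons_zero]
  rw [h0, upd_snoc hml halt]
  have : ((0 : Fin (n+1)).removeNth (Fin.cons y q : Fin (n+1) → U) : Fin n → U) = q := by
    rw [Fin.removeNth_zero, Fin.tail_cons]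
  rw [this]
  norm_num

lemma snoc_eq_sign_cons (hml : IsMultilinear K ω) (halt : IsAlternating ω)
    (q : Fin n → U) (y : U) :
    ω (Fin.snoc q y) = (-1:U)^n * ω (Fin.cons y q) := by
  rw [cons_eq_sign_snoc hml halt, ← mul_assoc, neg_one_sq_pow, one_mul]

lemma snoc_leibniz (hml : IsMultilinear K ω) (halt : IsAlternating ω) (hLeib : LeibnizRule ω)
    (q : Fin n → U) (a b : U) :
    ω (Fin.snoc q (a*b)) = a * ω (Fin.snoc q b) + b * ω (Fin.snoc q a) := by
  rw [snoc_eq_sign_cons hml halt, hLeib a b q, cons_eq_sign_snoc hml halt q b,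
    cons_eq_sign_snoc hml halt q a]
  have h := neg_one_sq_pow (U := U) n
  linear_combination (a * ω (Fin.snoc q b) + b * ω (Fin.snoc q a)) * h

lemma upd_leibniz (hml : IsMultilinear K ω) (halt : IsAlternating ω) (hLeib : LeibnizRule ω)
    (w : Fin (n+1) → U) (l : Fin (n+1)) (a b : U) :
    ω (Function.update w l (a*b))
      = a * ω (Function.update w l b) + b * ω (Function.update w l a) := by
  rw [upd_snoc hml halt, upd_snoc hml halt, upd_snoc hml halt,
    snoc_leibniz hml halt hLeib]
  ring

lemma snoc_add (hml : IsMultilinear K ω) (q : Fin n → U) (x y : U) :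
    ω (Fin.snoc q (x+y)) = ω (Fin.snoc q x) + ω (Fin.snoc q y) := by
  have h : ∀ z : U, ω (Fin.snoc q z) = ω (Function.update (Fin.snoc q 0 : Fin (n+1) → U) (Fin.last n) z) := by
    intro z; rw [Fin.update_snoc_last]
  rw [h, h x, h y, upd_add hml]

lemma snoc_negpow (hml : IsMultilinear K ω) (q : Fin n → U) (p : ℕ) (x : U) :
    ω (Fin.snoc q ((-1:U)^p * x)) = (-1:U)^p * ω (Fin.snoc q x) := by
  have h : ∀ z : U, ω (Fin.snoc q z) = ω (Function.update (Fin.snoc q 0 : Fin (n+1) → U) (Fin.last n) z) := by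
    intro z; rw [Fin.update_snoc_last]
  rw [h, h x, upd_negpow hml]

lemma snoc_sum (hml : IsMultilinear K ω) {β : Type*} (q : Fin n → U) (T : Finset β) (g : β → U) :
    ω (Fin.snoc q (∑ t ∈ T, g t)) = ∑ t ∈ T, ω (Fin.snoc q (g t)) := by
  have h : ∀ z : U, ω (Fin.snoc q z) = ω (Function.update (Fin.snoc q 0 : Fin (n+1) → U) (Fin.last n) z) := by
    intro z; rw [Fin.update_snoc_last]
  rw [h, upd_sum hml]
  exact Finset.sum_congr rfl (fun t _ => (h (g t)).symm)

lemma cons_one (hLeib : LeibnizRule ω) (q : Fin n → U) : ω (Fin.cons 1 q) = 0 := by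
  have h := hLeib 1 1 q
  simp only [one_mul] at h
  linear_combination -h

end leib



section strongpair
variable {K : Type*} [Field K] {U : Type*} [CommRing U] [Algebra K U] {n : ℕ}
variable {ω : (Fin (n+1) → U) → U}

lemma snoc_eq_sign_upd (hml : IsMultilinear K ω) (halt : IsAlternating ω)
    (w : Fin (n+1) → U) (l : Fin (n+1)) (x : U) :
    ω (Fin.snoc (l.removeNth w : Fin n → U) x) = (-1:U)^(n - (l:ℕ)) * ω (Function.update w l x) := by
  rw [upd_snoc hml halt, ← mul_assoc, neg_one_sq_pow, one_mul]

lemma strong_pair (hml : IsMultilinear K ω) (halt : IsAlternating ω)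
    (hstrong : ∀ (u : Fin n → U) (v : Fin (n + 2) → U), fPoly ω u v = 0)
    (q : Fin n → U) (w : Fin (n+1) → U) (y : U) :
    ∑ l : Fin (n+1), ω (Fin.snoc q (w l)) * ω (Function.update w l y)
      = ω (Fin.snoc q y) * ω w := by
  have h0 := hstrong q (Fin.snoc w y)
  unfold fPoly at h0
  rw [Fin.sum_univ_castSucc] at h0
  simp only [Fin.snoc_last, Fin.snoc_castSucc, Fin.coe_castSucc, Fin.val_last] at h0
  have hlast : ((Fin.last (n+1)).removeNth (Fin.snoc w y : Fin (n+2) → U) : Fin (n+1) → U) = w := by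
    rw [Fin.removeNth_last, Fin.init_snoc]
  rw [hlast] at h0
  have hterm : ∀ l : Fin (n+1),
      ω ((l.castSucc).removeNth (Fin.snoc w y : Fin (n+2) → U) : Fin (n+1) → U)
        = (-1:U)^(n - (l:ℕ)) * ω (Function.update w l y) := by
    intro l
    rw [removeNth_snoc_castSucc, snoc_eq_sign_upd hml halt]
  have key : ∑ l : Fin (n+1), ω (Fin.snoc q (w l)) * ω (Function.update w l y)
      = (-1:U)^(n+1) * ∑ l : Fin (n+1),
          (-1:U)^((l:ℕ)+1) * (ω (Fin.snoc q (w l)) *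
            ω ((l.castSucc).removeNth (Fin.snoc w y : Fin (n+2) → U) : Fin (n+1) → U)) := by
    rw [Finset.mul_sum]
    refine Finset.sum_congr rfl (fun l _ => ?_)
    rw [hterm l]
    have hsgn : (-1:U)^(n+1) * ((-1:U)^((l:ℕ)+1) * (-1:U)^(n - (l:ℕ))) = 1 := by
      rw [← pow_add, ← pow_add]
      have hl := l.isLt
      rw [neg_one_pow_par ((n+1)+(((l:ℕ)+1)+(n-(l:ℕ)))) 0 (by omega), pow_zero]
    linear_combination (-(ω (Fin.snoc q (w l)) * ω (Function.update w l y))) * hsgn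
  rw [key]
  have hsgn2 : (-1:U)^(n+1) * (-1:U)^((n+1)+1) = -1 := by
    rw [← pow_add]
    rw [neg_one_pow_par ((n+1)+((n+1)+1)) 1 (by omega), pow_one]
  linear_combination ((-1:U)^(n+1) * h0) - (ω (Fin.snoc q y) * ω w) * hsgn2

end strongpair


section master
variable {U : Type*} [CommRing U]

/-- the core antisymmetry cancellation -/
lemma master_cancel {m : ℕ} (ω' : (Fin m → U) → U) (v : Fin (m+2) → U) (h : U → U → U)
    (hsym : ∀ x y, h x y = h y x) :
    ∑ k : Fin (m+2), ∑ s : Fin (m+1),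
      (-1 : U)^((k:ℕ)+(s:ℕ)) *
        (h (v k) (v (k.succAbove s)) * ω' (fun a => v (k.succAbove (s.succAbove a)))) = 0 := by
  classical
  set f : Fin (m+2) × Fin (m+1) → U := fun p =>
    (-1 : U)^((p.1:ℕ)+(p.2:ℕ)) *
      (h (v p.1) (v (p.1.succAbove p.2)) * ω' (fun a => v (p.1.succAbove (p.2.succAbove a)))) with hf
  have hrw : ∑ k : Fin (m+2), ∑ s : Fin (m+1),
      (-1 : U)^((k:ℕ)+(s:ℕ)) *
        (h (v k) (v (k.succAbove s)) * ω' (fun a => v (k.succAbove (s.succAbove a))))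
      = ∑ p : Fin (m+2) × Fin (m+1), f p := by
    rw [← Finset.univ_product_univ, Finset.sum_product]
  rw [hrw]
  set g : Fin (m+2) × Fin (m+1) → Fin (m+2) × Fin (m+1) := fun p =>
    if h : (p.2:ℕ) < (p.1:ℕ) then (⟨(p.2:ℕ), by have := p.2.isLt; omega⟩, ⟨(p.1:ℕ) - 1, by have h1 := p.1.isLt; have h2 := p.2.isLt; omega⟩)
    else (⟨(p.2:ℕ)+1, by have := p.2.isLt; omega⟩, ⟨(p.1:ℕ), by have h2 := p.2.isLt; omega⟩) with hg
  refine Finset.sum_ninvolution g ?_ ?_ (fun _ => Finset.mem_univ _) ?_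
  · -- f a + f (g a) = 0
    rintro ⟨k, s⟩
    by_cases hks : (s:ℕ) < (k:ℕ)
    · have hgp : g (k, s) = (⟨(s:ℕ), by omega⟩, ⟨(k:ℕ)-1, by have h1 := k.isLt; have h2 := s.isLt; omega⟩) := by
        simp only [hg]; rw [dif_pos hks]
      rw [hgp]
      simp only [hf]
      have h1 : v (k.succAbove s) = v ⟨(s:ℕ), by omega⟩ := by
        congr 1; ext; rw [succAbove_val]; simp only [Fin.val_mk]; split_ifs <;> omega
      have h2 : v ((⟨(s:ℕ), by omega⟩ : Fin (m+2)).succAbove ⟨(k:ℕ)-1, by have h1 := k.isLt; have h2 := s.isLt; omega⟩) = v k := by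
        congr 1; ext; rw [succAbove_val]; simp only [Fin.val_mk]; split_ifs <;> omega
      have h3 : (fun a => v ((⟨(s:ℕ), by omega⟩ : Fin (m+2)).succAbove
            ((⟨(k:ℕ)-1, by have h1 := k.isLt; have h2 := s.isLt; omega⟩ : Fin (m+1)).succAbove a)))
          = (fun a => v (k.succAbove (s.succAbove a))) := by
        funext a
        congr 1
        ext
        simp only [succAbove_val]
        split_ifs <;> simp_all <;> omega
      have h4 : ((-1:U))^((s:ℕ)+((k:ℕ)-1)) = -(-1:U)^((k:ℕ)+(s:ℕ)) := by
        have : (k:ℕ)+(s:ℕ) = ((s:ℕ)+((k:ℕ)-1)) + 1 := by omega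
        rw [this, pow_succ]; ring
      rw [h1, h2, h3, h4, hsym (v k)]
      ring
    · have hgp : g (k, s) = (⟨(s:ℕ)+1, by have := s.isLt; omega⟩, ⟨(k:ℕ), by have h1 := k.isLt; have h2 := s.isLt; omega⟩) := by
        simp only [hg]; rw [dif_neg hks]
      rw [hgp]
      simp only [hf]
      have h1 : v (k.succAbove s) = v ⟨(s:ℕ)+1, by have := s.isLt; omega⟩ := by
        congr 1; ext; rw [succAbove_val]; simp only [Fin.val_mk]; split_ifs <;> omega
      have h2 : v ((⟨(s:ℕ)+1, by have := s.isLt; omega⟩ : Fin (m+2)).succAbove ⟨(k:ℕ), by have h1 := k.isLt; have h2 := s.isLt; omega⟩) = v k := by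
        congr 1; ext; rw [succAbove_val]; simp only [Fin.val_mk]; split_ifs <;> omega
      have h3 : (fun a => v ((⟨(s:ℕ)+1, by have := s.isLt; omega⟩ : Fin (m+2)).succAbove
            ((⟨(k:ℕ), by have h1 := k.isLt; have h2 := s.isLt; omega⟩ : Fin (m+1)).succAbove a)))
          = (fun a => v (k.succAbove (s.succAbove a))) := by
        funext a
        congr 1
        ext
        simp only [succAbove_val]
        split_ifs <;> simp_all <;> omega
      have h4 : ((-1:U))^(((s:ℕ)+1)+(k:ℕ)) = -(-1:U)^((k:ℕ)+(s:ℕ)) := by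
        have : ((s:ℕ)+1)+(k:ℕ) = ((k:ℕ)+(s:ℕ)) + 1 := by omega
        rw [this, pow_succ]; ring
      rw [h1, h2, h3, h4, hsym (v k)]
      ring
  · -- g a ≠ a
    rintro ⟨k, s⟩ -
    intro hcon
    by_cases hks : (s:ℕ) < (k:ℕ)
    · rw [show g (k, s) = (⟨(s:ℕ), by have := s.isLt; omega⟩, ⟨(k:ℕ)-1, by have h1 := k.isLt; have h2 := s.isLt; omega⟩) from by simp only [hg]; rw [dif_pos hks]] at hcon
      rw [Prod.ext_iff] at hcon
      have := congrArg Fin.val hcon.1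
      simp only [Fin.val_mk] at this
      omega
    · rw [show g (k, s) = (⟨(s:ℕ)+1, by have := s.isLt; omega⟩, ⟨(k:ℕ), by have h2 := s.isLt; omega⟩) from by simp only [hg]; rw [dif_neg hks]] at hcon
      rw [Prod.ext_iff] at hcon
      have := congrArg Fin.val hcon.1
      simp only [Fin.val_mk] at this
      omega
  · -- involution
    rintro ⟨k, s⟩
    by_cases hks : (s:ℕ) < (k:ℕ)
    · have hgp : g (k, s) = (⟨(s:ℕ), by omega⟩, ⟨(k:ℕ)-1, by have h1 := k.isLt; have h2 := s.isLt; omega⟩) := by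
        simp only [hg]; rw [dif_pos hks]
      rw [hgp]
      have hc : ¬ (((⟨(k:ℕ)-1, by have h1 := k.isLt; have h2 := s.isLt; omega⟩ : Fin (m+1)):ℕ) < ((⟨(s:ℕ), by omega⟩ : Fin (m+2)):ℕ)) := by simp only [Fin.val_mk]; omega
      simp only [hg]
      rw [dif_neg hc]
      ext <;> simp only [Fin.val_mk] <;> omega
    · have hgp : g (k, s) = (⟨(s:ℕ)+1, by have := s.isLt; omega⟩, ⟨(k:ℕ), by have h1 := k.isLt; have h2 := s.isLt; omega⟩) := by
        simp only [hg]; rw [dif_neg hks]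
      rw [hgp]
      have hc : (((⟨(k:ℕ), by have h1 := k.isLt; have h2 := s.isLt; omega⟩ : Fin (m+1)):ℕ) < ((⟨(s:ℕ)+1, by have := s.isLt; omega⟩ : Fin (m+2)):ℕ)) := by simp only [Fin.val_mk]; omega
      simp only [hg]
      rw [dif_pos hc]
      ext <;> simp only [Fin.val_mk] <;> omega

end master


/-- `D x = ω̃(u_1,…,u_{n+1},x)`, expanded. -/
def DOp {U : Type*} [CommRing U] {n : ℕ} (ω : (Fin (n+1) → U) → U) (u : Fin (n+1) → U)
    (x : U) : U :=
  (-1:U)^(n+1) * (x * ω u)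
    + ∑ j : Fin (n+1), (-1:U)^(j:ℕ) * (u j * ω (Fin.snoc (j.removeNth u : Fin n → U) x))

section expand
variable {K : Type*} [Field K] {U : Type*} [CommRing U] [Algebra K U] {n : ℕ}
variable {ω : (Fin (n+1) → U) → U}

lemma idWedge_snoc (u : Fin (n+1) → U) (x : U) :
    idWedge ω (Fin.snoc u x) = DOp ω u x := by
  unfold idWedge DOp
  rw [Fin.sum_univ_castSucc]
  simp only [Fin.snoc_castSucc, Fin.snoc_last, Fin.coe_castSucc, Fin.val_last]
  rw [Fin.removeNth_last, Fin.init_snoc, add_comm]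
  congr 1
  refine Finset.sum_congr rfl (fun j _ => ?_)
  rw [removeNth_snoc_castSucc]

lemma idWedge_update_sum (v : Fin (n+2) → U) (y : Fin (n+2) → U) :
    ∑ i : Fin (n+2), idWedge ω (Function.update v i (y i))
      = ∑ k : Fin (n+2), (-1:U)^(k:ℕ) * (y k * ω (k.removeNth v))
        + ∑ k : Fin (n+2), ∑ s : Fin (n+1), (-1:U)^(k:ℕ) *
            (v k * ω (Function.update (k.removeNth v : Fin (n+1) → U) s (y (k.succAbove s)))) := by
  unfold idWedge
  rw [Finset.sum_comm, ← Finset.sum_add_distrib]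
  refine Finset.sum_congr rfl (fun k _ => ?_)
  rw [Fin.sum_univ_succAbove _ k]
  congr 1
  · rw [Function.update_self, Fin.removeNth_update]
  · refine Finset.sum_congr rfl (fun s _ => ?_)
    rw [Function.update_of_ne (Fin.succAbove_ne k s).symm, removeNth_update_succAbove]

end expand

section sumupd
variable {K : Type*} [Field K] {U : Type*} [CommRing U] [Algebra K U] {n : ℕ}
variable {ω : (Fin (n+1) → U) → U}

lemma sum_upd_D (hml : IsMultilinear K ω) (halt : IsAlternating ω) (hLeib : LeibnizRule ω)
    (hstrong : ∀ (u : Fin n → U) (v : Fin (n + 2) → U), fPoly ω u v = 0)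
    (u : Fin (n+1) → U) (w : Fin (n+1) → U) :
    ∑ s : Fin (n+1), ω (Function.update w s (DOp ω u (w s)))
      = (-1:U)^(n+1) * ∑ s : Fin (n+1), w s * ω (Function.update w s (ω u))
        + ∑ s : Fin (n+1), ∑ j : Fin (n+1), (-1:U)^(j:ℕ) *
            (u j * ω (Function.update w s (ω (Fin.snoc (j.removeNth u : Fin n → U) (w s))))) := by
  have hper : ∀ s : Fin (n+1), ω (Function.update w s (DOp ω u (w s)))
      = (-1:U)^(n+1) * (w s * ω (Function.update w s (ω u)))
        + (-1:U)^(n+1) * (ω u * ω w)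
        + (∑ j : Fin (n+1), (-1:U)^(j:ℕ) *
            (u j * ω (Function.update w s (ω (Fin.snoc (j.removeNth u : Fin n → U) (w s))))))
        + (∑ j : Fin (n+1), (-1:U)^(j:ℕ) *
            (ω (Fin.snoc (j.removeNth u : Fin n → U) (w s)) * ω (Function.update w s (u j)))) := by
    intro s
    unfold DOp
    rw [upd_add hml, upd_negpow hml, upd_leibniz hml halt hLeib, Function.update_eq_self,
      upd_sum hml]
    have hj : ∀ j : Fin (n+1),
        ω (Function.update w s ((-1:U)^(j:ℕ) * (u j * ω (Fin.snoc (j.removeNth u : Fin n → U) (w s)))))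
          = (-1:U)^(j:ℕ) * (u j * ω (Function.update w s (ω (Fin.snoc (j.removeNth u : Fin n → U) (w s)))))
            + (-1:U)^(j:ℕ) * (ω (Fin.snoc (j.removeNth u : Fin n → U) (w s)) * ω (Function.update w s (u j))) := by
      intro j
      rw [upd_negpow hml, upd_leibniz hml halt hLeib]
      ring
    rw [Finset.sum_congr rfl (fun j _ => hj j), Finset.sum_add_distrib]
    ring
  rw [Finset.sum_congr rfl (fun s _ => hper s)]
  rw [Finset.sum_add_distrib, Finset.sum_add_distrib, Finset.sum_add_distrib, Finset.mul_sum]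
  have hvanish : (∑ s : Fin (n+1), (-1:U)^(n+1) * (ω u * ω w))
      + ∑ s : Fin (n+1), ∑ j : Fin (n+1), (-1:U)^(j:ℕ) *
          (ω (Fin.snoc (j.removeNth u : Fin n → U) (w s)) * ω (Function.update w s (u j))) = 0 := by
    rw [Finset.sum_comm]
    have hjj : ∀ j : Fin (n+1), ∑ s : Fin (n+1), (-1:U)^(j:ℕ) *
        (ω (Fin.snoc (j.removeNth u : Fin n → U) (w s)) * ω (Function.update w s (u j)))
          = (-1:U)^(n:ℕ) * (ω u * ω w) := by
      intro j
      rw [← Finset.mul_sum, strong_pair hml halt hstrong (j.removeNth u) w (u j)]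
      rw [snoc_eq_sign_upd hml halt u j (u j), Function.update_eq_self]
      rw [← mul_assoc, ← mul_assoc, ← pow_add]
      have hl := j.isLt
      rw [neg_one_pow_par ((j:ℕ) + (n - (j:ℕ))) n (by omega)]
      ring
    rw [Finset.sum_congr rfl (fun j _ => hjj j), ← Finset.sum_add_distrib]
    refine Finset.sum_eq_zero (fun s _ => ?_)
    rw [pow_succ]
    ring
  linear_combination hvanish
end sumupd

section e0
variable {K : Type*} [Field K] {U : Type*} [CommRing U] [Algebra K U] {n : ℕ}
variable {ω : (Fin (n+1) → U) → U}

lemma E0_vanish (hml : IsMultilinear K ω) (halt : IsAlternating ω)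
    (u : Fin (n+1) → U) (v : Fin (n+2) → U) :
    ∑ k : Fin (n+2), (-1:U)^(k:ℕ) * (v k * ((-1:U)^(n+1) *
      ∑ s : Fin (n+1), (k.removeNth v : Fin (n+1) → U) s *
        ω (Function.update (k.removeNth v : Fin (n+1) → U) s (ω u)))) = 0 := by
  have hM := master_cancel (U := U) (fun q => ω (Fin.snoc q (ω u))) v (fun x y => x * y)
    (fun x y => mul_comm x y)
  have step1 : ∑ k : Fin (n+2), (-1:U)^(k:ℕ) * (v k * ((-1:U)^(n+1) *
      ∑ s : Fin (n+1), (k.removeNth v : Fin (n+1) → U) s *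
        ω (Function.update (k.removeNth v : Fin (n+1) → U) s (ω u))))
      = ∑ k : Fin (n+2), ∑ s : Fin (n+1),
          -((-1:U) ^ ((k:ℕ) + (s:ℕ)) * ((v k * v (k.succAbove s)) *
            ω (Fin.snoc (fun a => v (k.succAbove (s.succAbove a)) : Fin n → U) (ω u)))) := by
    refine Finset.sum_congr rfl (fun k _ => ?_)
    rw [Finset.mul_sum, Finset.mul_sum, Finset.mul_sum]
    refine Finset.sum_congr rfl (fun s _ => ?_)
    rw [upd_snoc hml halt]
    have h1 : ((k.removeNth v : Fin (n+1) → U) s) = v (k.succAbove s) := rfl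
    have h2 : ((s.removeNth (k.removeNth v : Fin (n+1) → U)) : Fin n → U)
        = (fun a => v (k.succAbove (s.succAbove a)) : Fin n → U) := rfl
    rw [h1, h2]
    have hl := s.isLt
    have hsgn : (-1:U)^(k:ℕ) * ((-1:U)^(n+1) * (-1:U)^(n - (s:ℕ)))
        = -(-1:U)^((k:ℕ)+(s:ℕ)) := by
      rw [← pow_add, ← pow_add, neg_one_pow_par ((k:ℕ) + ((n+1) + (n - (s:ℕ)))) (((k:ℕ)+(s:ℕ))+1) (by omega),
        pow_succ]
      ring
    linear_combination (v k * v (k.succAbove s) *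
      ω (Fin.snoc (fun a => v (k.succAbove (s.succAbove a)) : Fin n → U) (ω u))) * hsgn
  rw [step1]
  simp only [Finset.sum_neg_distrib]
  rw [hM, neg_zero]

end e0

section mainlem
variable {K : Type*} [Field K] {U : Type*} [CommRing U] [Algebra K U] {n : ℕ}
variable {ω : (Fin (n+1) → U) → U}

lemma DOp_idWedge (hml : IsMultilinear K ω) (halt : IsAlternating ω)
    (hFI : FundamentalIdentityI ω) (hLeib : LeibnizRule ω)
    (u : Fin (n+1) → U) (v : Fin (n+2) → U) :
    DOp ω u (idWedge ω v) =
      (-1:U)^(n+1) * (idWedge ω v * ω u)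
      + ∑ j : Fin (n+1), ∑ k : Fin (n+2), (-1:U)^((j:ℕ)+(k:ℕ)) *
          (u j * (ω (k.removeNth v) * ω (Fin.snoc (j.removeNth u : Fin n → U) (v k))))
      + ∑ j : Fin (n+1), ∑ k : Fin (n+2), (-1:U)^((j:ℕ)+(k:ℕ)) *
          (u j * (v k * ∑ s : Fin (n+1),
            ω (Function.update (k.removeNth v : Fin (n+1) → U) s
              (ω (Fin.snoc (j.removeNth u : Fin n → U) (v (k.succAbove s))))))) := by
  unfold DOp
  rw [add_assoc]
  congr 1
  rw [← Finset.sum_add_distrib]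
  refine Finset.sum_congr rfl (fun j _ => ?_)
  -- expand ω (snoc q_j (idWedge ω v))
  have hsnoc : ω (Fin.snoc (j.removeNth u : Fin n → U) (idWedge ω v))
      = ∑ k : Fin (n+2), ((-1:U)^(k:ℕ) *
          (v k * ∑ s : Fin (n+1),
              ω (Function.update (k.removeNth v : Fin (n+1) → U) s
                (ω (Fin.snoc (j.removeNth u : Fin n → U) (v (k.succAbove s))))))
            + (-1:U)^(k:ℕ) * (ω (k.removeNth v) * ω (Fin.snoc (j.removeNth u : Fin n → U) (v k)))) := by
    unfold idWedge
    rw [snoc_sum hml]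
    refine Finset.sum_congr rfl (fun k _ => ?_)
    rw [snoc_negpow hml, snoc_leibniz hml halt hLeib]
    have hfi := hFI (j.removeNth u) (k.removeNth v)
    have hfi' : ω (Fin.snoc (j.removeNth u : Fin n → U) (ω (k.removeNth v)))
        = ∑ s : Fin (n+1), ω (Function.update (k.removeNth v : Fin (n+1) → U) s
            (ω (Fin.snoc (j.removeNth u : Fin n → U) (v (k.succAbove s))))) := hfi
    rw [hfi']
    ring
  rw [hsnoc]
  have hms : ∀ (c : U) (g : Fin (n+2) → U), c * ∑ k : Fin (n+2), g k = ∑ k : Fin (n+2), c * g k :=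
    fun c g => Finset.mul_sum _ _ _
  rw [hms (u j), hms ((-1:U)^(j:ℕ)), ← Finset.sum_add_distrib]
  refine Finset.sum_congr rfl (fun k _ => ?_)
  rw [pow_add]
  ring

lemma termA (u : Fin (n+1) → U) (v : Fin (n+2) → U) :
    ∑ k : Fin (n+2), (-1:U)^(k:ℕ) * (DOp ω u (v k) * ω (k.removeNth v))
      = (-1:U)^(n+1) * (idWedge ω v * ω u)
        + ∑ j : Fin (n+1), ∑ k : Fin (n+2), (-1:U)^((j:ℕ)+(k:ℕ)) *
            (u j * (ω (k.removeNth v) * ω (Fin.snoc (j.removeNth u : Fin n → U) (v k)))) := by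
  have h : ∀ k : Fin (n+2), (-1:U)^(k:ℕ) * (DOp ω u (v k) * ω (k.removeNth v))
      = (-1:U)^(n+1) * ((-1:U)^(k:ℕ) * (v k * ω (k.removeNth v)) * ω u)
        + ∑ j : Fin (n+1), (-1:U)^((j:ℕ)+(k:ℕ)) *
            (u j * (ω (k.removeNth v) * ω (Fin.snoc (j.removeNth u : Fin n → U) (v k)))) := by
    intro k
    unfold DOp
    rw [add_mul, mul_add]
    congr 1
    · ring
    · rw [Finset.sum_mul, Finset.mul_sum]
      refine Finset.sum_congr rfl (fun j _ => ?_)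
      rw [pow_add]
      ring
  rw [Finset.sum_congr rfl (fun k _ => h k), Finset.sum_add_distrib, Finset.sum_comm]
  congr 1
  rw [← Finset.mul_sum, ← Finset.sum_mul]
  rfl

lemma termB (hml : IsMultilinear K ω) (halt : IsAlternating ω) (hLeib : LeibnizRule ω)
    (hstrong : ∀ (u : Fin n → U) (v : Fin (n + 2) → U), fPoly ω u v = 0)
    (u : Fin (n+1) → U) (v : Fin (n+2) → U) :
    ∑ k : Fin (n+2), ∑ s : Fin (n+1), (-1:U)^(k:ℕ) *
        (v k * ω (Function.update (k.removeNth v : Fin (n+1) → U) s (DOp ω u (v (k.succAbove s)))))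
      = ∑ j : Fin (n+1), ∑ k : Fin (n+2), (-1:U)^((j:ℕ)+(k:ℕ)) *
          (u j * (v k * ∑ s : Fin (n+1),
            ω (Function.update (k.removeNth v : Fin (n+1) → U) s
              (ω (Fin.snoc (j.removeNth u : Fin n → U) (v (k.succAbove s))))))) := by
  have h1 : ∀ k : Fin (n+2), ∑ s : Fin (n+1), (-1:U)^(k:ℕ) *
      (v k * ω (Function.update (k.removeNth v : Fin (n+1) → U) s (DOp ω u (v (k.succAbove s)))))
      = (-1:U)^(k:ℕ) * (v k * ((-1:U)^(n+1) *
            ∑ s : Fin (n+1), (k.removeNth v : Fin (n+1) → U) s *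
              ω (Function.update (k.removeNth v : Fin (n+1) → U) s (ω u))))
        + (-1:U)^(k:ℕ) * (v k * ∑ s : Fin (n+1), ∑ j : Fin (n+1), (-1:U)^(j:ℕ) *
            (u j * ω (Function.update (k.removeNth v : Fin (n+1) → U) s
              (ω (Fin.snoc (j.removeNth u : Fin n → U) ((k.removeNth v : Fin (n+1) → U) s)))))) := by
    intro k
    rw [← Finset.mul_sum, ← Finset.mul_sum]
    have hD : ∑ s : Fin (n+1), ω (Function.update (k.removeNth v : Fin (n+1) → U) s
        (DOp ω u (v (k.succAbove s))))
        = ∑ s : Fin (n+1), ω (Function.update (k.removeNth v : Fin (n+1) → U) s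
            (DOp ω u ((k.removeNth v : Fin (n+1) → U) s))) := rfl
    rw [hD, sum_upd_D hml halt hLeib hstrong u (k.removeNth v)]
    ring
  rw [Finset.sum_congr rfl (fun k _ => h1 k), Finset.sum_add_distrib]
  rw [E0_vanish hml halt u v, zero_add]
  -- now reorder the triple sum
  have h2 : ∀ k : Fin (n+2), (-1:U)^(k:ℕ) * (v k * ∑ s : Fin (n+1), ∑ j : Fin (n+1), (-1:U)^(j:ℕ) *
      (u j * ω (Function.update (k.removeNth v : Fin (n+1) → U) s
        (ω (Fin.snoc (j.removeNth u : Fin n → U) ((k.removeNth v : Fin (n+1) → U) s))))))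
      = ∑ j : Fin (n+1), (-1:U)^((j:ℕ)+(k:ℕ)) *
          (u j * (v k * ∑ s : Fin (n+1),
            ω (Function.update (k.removeNth v : Fin (n+1) → U) s
              (ω (Fin.snoc (j.removeNth u : Fin n → U) (v (k.succAbove s))))))) := by
    intro k
    rw [Finset.sum_comm]
    rw [Finset.mul_sum, Finset.mul_sum]
    refine Finset.sum_congr rfl (fun j _ => ?_)
    rw [Finset.mul_sum, Finset.mul_sum, Finset.mul_sum, Finset.mul_sum]
    rw [Finset.mul_sum]
    refine Finset.sum_congr rfl (fun s _ => ?_)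
    have hh : ((k.removeNth v : Fin (n+1) → U) s) = v (k.succAbove s) := rfl
    rw [hh, pow_add]
    ring
  rw [Finset.sum_congr rfl (fun k _ => h2 k), Finset.sum_comm]

end mainlem

section parts
variable {K : Type*} [Field K] {U : Type*} [CommRing U] [Algebra K U] {n : ℕ}
variable {ω : (Fin (n+1) → U) → U}

theorem part1 (hml : IsMultilinear K ω) (halt : IsAlternating ω)
    (hFI : FundamentalIdentityI ω) (hLeib : LeibnizRule ω)
    (hstrong : ∀ (u : Fin n → U) (v : Fin (n + 2) → U), fPoly ω u v = 0) :
    FundamentalIdentityI (idWedge ω) := by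
  intro u v
  rw [idWedge_snoc u (idWedge ω v), DOp_idWedge hml halt hFI hLeib u v]
  have hrhs : ∑ i : Fin (n+2), idWedge ω (Function.update v i (idWedge ω (Fin.snoc u (v i))))
      = ∑ i : Fin (n+2), idWedge ω (Function.update v i ((fun i => DOp ω u (v i)) i)) := by
    refine Finset.sum_congr rfl (fun i _ => ?_)
    rw [idWedge_snoc]
  rw [hrhs, idWedge_update_sum v (fun i => DOp ω u (v i))]
  rw [termA u v, termB hml halt hLeib hstrong u v]

lemma wedge_diag_zero (v : Fin (n+3) → U) :
    ∑ i : Fin (n+3), (-1:U)^(i:ℕ) * (v i * idWedge ω (i.removeNth v)) = 0 := by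
  have hM := master_cancel (U := U) ω v (fun x y => x * y) (fun x y => mul_comm x y)
  rw [← hM]
  refine Finset.sum_congr rfl (fun i _ => ?_)
  unfold idWedge
  rw [Finset.mul_sum, Finset.mul_sum]
  refine Finset.sum_congr rfl (fun s _ => ?_)
  have h1 : (((i.removeNth v) : Fin (n+2) → U) s) = v (i.succAbove s) := rfl
  have h2 : ((s.removeNth ((i.removeNth v) : Fin (n+2) → U)) : Fin (n+1) → U)
      = (fun a => v (i.succAbove (s.succAbove a)) : Fin (n+1) → U) := rfl
  rw [h1, h2, pow_add]
  ring

lemma dj_wedge_zero (hstrong : ∀ (u : Fin n → U) (v : Fin (n + 2) → U), fPoly ω u v = 0)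
    (q : Fin n → U) (v : Fin (n+3) → U) :
    ∑ i : Fin (n+3), (-1:U)^((i:ℕ)+1) * (ω (Fin.snoc q (v i)) * idWedge ω (i.removeNth v)) = 0 := by
  have hM := master_cancel (U := U) ω v
    (fun x y => ω (Fin.snoc q x) * y + x * ω (Fin.snoc q y))
    (fun x y => by ring)
  have hC : ∑ r : Fin (n+3), (-1:U)^(r:ℕ) * (v r * fPoly ω q (r.removeNth v)) = 0 := by
    refine Finset.sum_eq_zero (fun r _ => ?_)
    rw [hstrong q (r.removeNth v)]
    ring
  have key : (∑ i : Fin (n+3), (-1:U)^((i:ℕ)+1) * (ω (Fin.snoc q (v i)) * idWedge ω (i.removeNth v)))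
      + ∑ r : Fin (n+3), (-1:U)^(r:ℕ) * (v r * fPoly ω q (r.removeNth v))
      = - ∑ k : Fin (n+3), ∑ s : Fin (n+2), (-1:U)^((k:ℕ)+(s:ℕ)) *
          ((ω (Fin.snoc q (v k)) * v (k.succAbove s) + v k * ω (Fin.snoc q (v (k.succAbove s)))) *
            ω (fun a => v (k.succAbove (s.succAbove a)))) := by
    rw [← Finset.sum_add_distrib, ← Finset.sum_neg_distrib]
    refine Finset.sum_congr rfl (fun i _ => ?_)
    unfold idWedge fPoly
    simp only [Finset.mul_sum]
    rw [← Finset.sum_add_distrib, ← Finset.sum_neg_distrib]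
    refine Finset.sum_congr rfl (fun s _ => ?_)
    have h1 : (((i.removeNth v) : Fin (n+2) → U) s) = v (i.succAbove s) := rfl
    have h2 : ((s.removeNth ((i.removeNth v) : Fin (n+2) → U)) : Fin (n+1) → U)
        = (fun a => v (i.succAbove (s.succAbove a)) : Fin (n+1) → U) := rfl
    rw [h1, h2]
    ring
  rw [hM, neg_zero] at key
  linear_combination key - hC

theorem part2 (hml : IsMultilinear K ω) (halt : IsAlternating ω)
    (hstrong : ∀ (u : Fin n → U) (v : Fin (n + 2) → U), fPoly ω u v = 0)
    (u : Fin (n+1) → U) (v : Fin (n+3) → U) :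
    fPoly (idWedge ω) u v = 0 := by
  unfold fPoly
  have hper : ∀ i : Fin (n+3), (-1:U)^((i:ℕ)+1) * (idWedge ω (Fin.snoc u (v i)) * idWedge ω (i.removeNth v))
      = (-1:U)^(n+1) * (ω u * (-((-1:U)^(i:ℕ) * (v i * idWedge ω (i.removeNth v)))))
        + ∑ j : Fin (n+1), (-1:U)^(j:ℕ) * (u j *
            ((-1:U)^((i:ℕ)+1) * (ω (Fin.snoc (j.removeNth u : Fin n → U) (v i)) * idWedge ω (i.removeNth v)))) := by
    intro i
    rw [idWedge_snoc]
    unfold DOp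
    rw [add_mul, mul_add, Finset.sum_mul, Finset.mul_sum]
    congr 1
    · rw [pow_succ]
      ring
    · refine Finset.sum_congr rfl (fun j _ => ?_)
      ring
  rw [Finset.sum_congr rfl (fun i _ => hper i), Finset.sum_add_distrib, Finset.sum_comm]
  have hA : ∑ i : Fin (n+3), (-1:U)^(n+1) * (ω u * (-((-1:U)^(i:ℕ) * (v i * idWedge ω (i.removeNth v))))) = 0 := by
    rw [← Finset.mul_sum]
    rw [show (∑ i : Fin (n+3), ω u * (-((-1:U)^(i:ℕ) * (v i * idWedge ω (i.removeNth v)))))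
        = ω u * (- ∑ i : Fin (n+3), (-1:U)^(i:ℕ) * (v i * idWedge ω (i.removeNth v))) from by
      rw [← Finset.sum_neg_distrib, ← Finset.mul_sum]]
    rw [wedge_diag_zero, neg_zero, mul_zero, mul_zero]
  have hB : ∑ j : Fin (n+1), ∑ i : Fin (n+3), (-1:U)^(j:ℕ) * (u j *
      ((-1:U)^((i:ℕ)+1) * (ω (Fin.snoc (j.removeNth u : Fin n → U) (v i)) * idWedge ω (i.removeNth v)))) = 0 := by
    refine Finset.sum_eq_zero (fun j _ => ?_)
    rw [← Finset.mul_sum, ← Finset.mul_sum, dj_wedge_zero hstrong (j.removeNth u) v]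
    simp
  rw [hA, hB, add_zero]

theorem part3 (hml : IsMultilinear K ω) (halt : IsAlternating ω) (hLeib : LeibnizRule ω)
    (a b : U) (u : Fin (n+1) → U) :
    idWedge ω (Fin.cons (a * b) u) - a * idWedge ω (Fin.cons b u)
        - b * idWedge ω (Fin.cons a u) =
      -((a * b) * idWedge ω (Fin.cons 1 u)) := by
  have hexp : ∀ x : U, idWedge ω (Fin.cons x u : Fin (n+2) → U)
      = x * ω u + ∑ j : Fin (n+1), (-1:U)^((j:ℕ)+1) *
          (u j * ω (Fin.cons x (j.removeNth u : Fin n → U))) := by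
    intro x
    unfold idWedge
    rw [Fin.sum_univ_succ]
    congr 1
    · simp [Fin.removeNth_zero]
    · refine Finset.sum_congr rfl (fun j _ => ?_)
      rw [removeNth_cons_succ]
      simp [Fin.val_succ]
  have hsum : ∑ j : Fin (n+1), (-1:U)^((j:ℕ)+1) * (u j * ω (Fin.cons (a*b) (j.removeNth u : Fin n → U)))
      = a * ∑ j : Fin (n+1), (-1:U)^((j:ℕ)+1) * (u j * ω (Fin.cons b (j.removeNth u : Fin n → U)))
        + b * ∑ j : Fin (n+1), (-1:U)^((j:ℕ)+1) * (u j * ω (Fin.cons a (j.removeNth u : Fin n → U))) := by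
    rw [Finset.mul_sum, Finset.mul_sum, ← Finset.sum_add_distrib]
    refine Finset.sum_congr rfl (fun j _ => ?_)
    rw [hLeib a b]
    ring
  have hone : ∑ j : Fin (n+1), (-1:U)^((j:ℕ)+1) * (u j * ω (Fin.cons (1:U) (j.removeNth u : Fin n → U))) = 0 := by
    refine Finset.sum_eq_zero (fun j _ => ?_)
    rw [cons_one hLeib]
    ring
  rw [hexp (a*b), hexp a, hexp b, hexp 1, hsum, hone]
  ring

end parts

/-- If `(U,·,ω)` is a strong `(n+1)`-Lie-Poisson algebra over a field of characteristic `0`,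
then `ω̃ = id ∧ ω` satisfies: (1) the Fundamental Identity of type I, so `(U,ω̃)` is an
`(n+2)`-Lie algebra; (2) `f^{ω̃} = 0`; (3) the unit identity
`ω̃(u·u',u_1,…) − u·ω̃(u',u_1,…) − u'·ω̃(u,u_1,…) = −(u·u')·ω̃(1,u_1,…)`. -/
theorem idWedge_strong_LiePoisson {K : Type*} [Field K] [CharZero K]
    {U : Type*} [CommRing U] [Algebra K U] {n : ℕ}
    (ω : (Fin (n + 1) → U) → U)
    (hml : IsMultilinear K ω) (halt : IsAlternating ω)
    (hFI : FundamentalIdentityI ω) (hLeib : LeibnizRule ω)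
    (hstrong : ∀ (u : Fin n → U) (v : Fin (n + 2) → U), fPoly ω u v = 0) :
    FundamentalIdentityI (idWedge ω) ∧
      (∀ (u : Fin (n + 1) → U) (v : Fin (n + 3) → U), fPoly (idWedge ω) u v = 0) ∧
      (∀ (a b : U) (u : Fin (n + 1) → U),
        idWedge ω (Fin.cons (a * b) u) - a * idWedge ω (Fin.cons b u)
            - b * idWedge ω (Fin.cons a u) =
          -((a * b) * idWedge ω (Fin.cons 1 u))) := by
  exact ⟨part1 hml halt hFI hLeib hstrong,
    fun u v => part2 hml halt hstrong u v,
    fun a b u => part3 hml halt hLeib a b u⟩
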